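/- Let (V,g) be a 4-dimensional Lorentzian vector space and Ψ : V → ℝ³ linear with component functionals Ψ¹,Ψ²,Ψ³ ∈ V*. If the covector Hodge dual ⋆(Ψ¹∧Ψ²∧Ψ³) is isotropic (its g⁻¹-square norm is zero) then the restriction of g to ker Ψ is degenerate or Ψ is not surjective; equivalently, if Ψ is surjective and ker Ψ is either timelike or spacelike, then the family (⋆(Ψ¹∧Ψ²∧Ψ³), Ψ¹, Ψ², Ψ³) is a basis of V*. -/

import Mathlib

/-- If `Ψ : V → ℝ³` is a surjective linear map whose kernel is timelike or
spacelike, then `(⋆(Ψ¹∧Ψ²∧Ψ³), Ψ¹, Ψ², Ψ³)` is a basis of `V*`, where the Hodge dual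
covector `σ = ⋆(Ψ¹∧Ψ²∧Ψ³)` is characterized by `σ(X) = vol(Ψ¹^♯, Ψ²^♯, Ψ³^♯, X)`. -/
theorem stmt7 {V : Type*} [AddCommGroup V] [Module ℝ V]
    (g : V →ₗ[ℝ] V →ₗ[ℝ] ℝ)
    (b : Module.Basis (Fin 4) ℝ V)
    (hb : ∀ i j, g (b i) (b j) = if i = j then (if i = 0 then (-1 : ℝ) else 1) else 0)
    (gs : Module.Dual ℝ V →ₗ[ℝ] V)
    (hgs1 : ∀ X : V, gs (g X) = X)
    (hgs2 : ∀ α : Module.Dual ℝ V, g (gs α) = α)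
    (vol : V [⋀^Fin 4]→ₗ[ℝ] ℝ) (hvol : vol (fun i => b i) = 1)
    (Ψ : V →ₗ[ℝ] (Fin 3 → ℝ)) (hΨ : Function.Surjective Ψ)
    (hker : (∀ X ∈ LinearMap.ker Ψ, X ≠ 0 → g X X < 0) ∨
      (∀ X ∈ LinearMap.ker Ψ, X ≠ 0 → 0 < g X X))
    (σ : Module.Dual ℝ V)
    (hσ : ∀ X : V, σ X =
      vol ![gs (Ψ.dualMap (LinearMap.proj 0)), gs (Ψ.dualMap (LinearMap.proj 1)),
        gs (Ψ.dualMap (LinearMap.proj 2)), X]) :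
    LinearIndependent ℝ
        (Fin.cons σ (fun I => Ψ.dualMap (LinearMap.proj I)) : Fin 4 → Module.Dual ℝ V) ∧
      Submodule.span ℝ
        (Set.range
          (Fin.cons σ (fun I => Ψ.dualMap (LinearMap.proj I)) : Fin 4 → Module.Dual ℝ V)) =
        ⊤ := by
  classical
  haveI : FiniteDimensional ℝ V := Module.Finite.of_basis b
  have hfr : Module.finrank ℝ V = 4 := by
    simpa using Module.finrank_eq_card_basis b
  set Ψd : Fin 3 → Module.Dual ℝ V := fun I => Ψ.dualMap (LinearMap.proj I) with hΨd
  -- the three component functionals are linearly independent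
  have hΨLI : LinearIndependent ℝ Ψd := by
    have hproj : LinearIndependent ℝ
        (fun I : Fin 3 => (LinearMap.proj I : (Fin 3 → ℝ) →ₗ[ℝ] ℝ)) := by
      rw [Fintype.linearIndependent_iff]
      intro a ha J
      have := LinearMap.congr_fun ha (Pi.single J 1)
      simpa [LinearMap.proj_apply, Pi.single_apply] using this
    have hinj := LinearMap.dualMap_injective_of_surjective hΨ
    exact hproj.map' Ψ.dualMap (LinearMap.ker_eq_bot.mpr hinj)
  -- pick a nonzero kernel vector
  obtain ⟨n, hnker, hn0⟩ : ∃ n, n ∈ LinearMap.ker Ψ ∧ n ≠ 0 := by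
    by_contra h
    push_neg at h
    have hinj : Function.Injective Ψ := by
      rw [← LinearMap.ker_eq_bot, eq_bot_iff]
      intro x hx
      simpa using h x hx
    have hle := LinearMap.finrank_le_finrank_of_injective hinj
    rw [hfr] at hle
    simp [Module.finrank_pi] at hle
  have hΨn : ∀ I : Fin 3, Ψd I n = 0 := by
    intro I
    have : Ψ n = 0 := hnker
    simp [hΨd, LinearMap.dualMap_apply, this]
  have hgnn : g n n ≠ 0 := by
    rcases hker with h | h
    · exact (h n hnker hn0).ne
    · exact (h n hnker hn0).ne'
  set m : Fin 4 → V := ![gs (Ψd 0), gs (Ψd 1), gs (Ψd 2), n] with hm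
  -- the sharped covectors together with n are linearly independent
  have hmLI : LinearIndependent ℝ m := by
    rw [Fintype.linearIndependent_iff]
    intro a ha
    have ha' : a 0 • m 0 + a 1 • m 1 + a 2 • m 2 + a 3 • m 3 = 0 := by
      rw [← ha, Fin.sum_univ_four]
    have h3 : a 3 = 0 := by
      have := congrArg (fun X => g X n) ha'
      simp only [map_add, map_smul, LinearMap.add_apply, LinearMap.smul_apply, map_zero,
        LinearMap.zero_apply] at this
      have e0 : g (m 0) n = 0 := by simp [hm, hgs2, hΨn 0]
      have e1 : g (m 1) n = 0 := by simp [hm, hgs2, hΨn 1]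
      have e2 : g (m 2) n = 0 := by simp [hm, hgs2, hΨn 2]
      have e3 : g (m 3) n = g n n := by simp [hm]
      rw [e0, e1, e2, e3] at this
      simp only [mul_zero, zero_add, smul_eq_mul] at this
      exact (mul_eq_zero.mp this).resolve_right hgnn
    have ha'' : a 0 • gs (Ψd 0) + a 1 • gs (Ψd 1) + a 2 • gs (Ψd 2) = 0 := by
      have : m 0 = gs (Ψd 0) ∧ m 1 = gs (Ψd 1) ∧ m 2 = gs (Ψd 2) := by
        refine ⟨?_, ?_, ?_⟩ <;> simp [hm]
      rw [h3, zero_smul, add_zero, this.1, this.2.1, this.2.2] at ha'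
      exact ha'
    have hdual : a 0 • Ψd 0 + a 1 • Ψd 1 + a 2 • Ψd 2 = 0 := by
      have := congrArg g ha''
      simpa [map_add, map_smul, hgs2] using this
    have hall : ∀ I : Fin 3, a I.castSucc = 0 ∨ True := fun _ => Or.inr trivial
    have := Fintype.linearIndependent_iff.mp hΨLI (fun I => a I.castSucc)
    have hz : ∀ I : Fin 3, a I.castSucc = 0 := by
      apply this
      rw [Fin.sum_univ_three]
      convert hdual using 3 <;> rfl
    intro i
    fin_cases i
    · exact hz 0
    · exact hz 1
    · exact hz 2
    · exact h3
  have hmspan : Submodule.span ℝ (Set.range m) = ⊤ := by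
    apply hmLI.span_eq_top_of_card_eq_finrank
    simp [hfr]
  -- σ n ≠ 0
  have hσn : σ n ≠ 0 := by
    have hdet : IsUnit (b.det m) := (Module.Basis.is_basis_iff_det b).mp ⟨hmLI, hmspan⟩
    have hv : vol = vol ⇑b • b.det := vol.eq_smul_basis_det b
    have : σ n = b.det m := by
      rw [hσ n]
      have hmn : ![gs (Ψ.dualMap (LinearMap.proj 0)), gs (Ψ.dualMap (LinearMap.proj 1)),
          gs (Ψ.dualMap (LinearMap.proj 2)), n] = m := rfl
      rw [hmn, hv]
      simp only [AlternatingMap.smul_apply, smul_eq_mul]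
      rw [show vol ⇑b = 1 from hvol, one_mul]
    rw [this]
    exact (isUnit_iff_ne_zero.mp hdet)
  -- linear independence of the full family
  have hLI : LinearIndependent ℝ (Fin.cons σ Ψd : Fin 4 → Module.Dual ℝ V) := by
    rw [Fintype.linearIndependent_iff]
    intro a ha
    have hsum : a 0 • σ + ∑ I : Fin 3, a I.succ • Ψd I = 0 := by
      have hrw : ∑ i : Fin 4, a i • Fin.cons σ Ψd i
          = a 0 • σ + ∑ I : Fin 3, a I.succ • Ψd I := by
        rw [Fin.sum_univ_succ]
        simp only [Fin.cons_zero, Fin.cons_succ]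
      rw [← hrw]
      exact ha
    have h0 : a 0 = 0 := by
      have := congrArg (fun f : Module.Dual ℝ V => f n) hsum
      simp only [LinearMap.add_apply, LinearMap.smul_apply, smul_eq_mul,
        LinearMap.zero_apply] at this
      rw [show ((∑ I : Fin 3, a I.succ • Ψd I) n) = 0 by
        simp [LinearMap.sum_apply, hΨn]] at this
      have : a 0 * σ n = 0 := by linarith
      exact (mul_eq_zero.mp this).resolve_right hσn
    have hrest : ∑ I : Fin 3, a I.succ • Ψd I = 0 := by
      rw [h0, zero_smul, zero_add] at hsum
      exact hsum
    have hz := Fintype.linearIndependent_iff.mp hΨLI (fun I => a I.succ) hrest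
    intro i
    rcases Fin.eq_zero_or_eq_succ i with h | ⟨j, rfl⟩
    · rw [h]; exact h0
    · exact hz j
  refine ⟨hLI, ?_⟩
  apply hLI.span_eq_top_of_card_eq_finrank
  simp [Subspace.dual_finrank_eq, hfr]
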